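/- For nontrivial abelian groups G₀ and G₁, the tensor product G₀ ⊗ G₁ contains an element of infinite order if and only if both G₀ and G₁ contain elements of infinite order. -/

import Mathlib

open TensorProduct

lemma exists_rat_hom {G : Type} [AddCommGroup G] (x : G)
    (hx : ∀ n : ℕ, 0 < n → n • x ≠ 0) : ∃ φ : G →ₗ[ℤ] ℚ, φ x ≠ 0 := by
  classical
  set f : ℤ →ₗ[ℤ] G := LinearMap.toSpanSingleton ℤ G x with hfdef
  have hf : Function.Injective f := by
    rw [← LinearMap.ker_eq_bot, LinearMap.ker_eq_bot']
    intro m hm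
    by_contra h
    apply hx m.natAbs (Int.natAbs_pos.mpr h)
    have hm' : m • x = 0 := hm
    have h2 : (m.natAbs : ℤ) • x = 0 := by
      rcases Int.natAbs_eq m with e | e
      · rw [← e]; exact hm'
      · have : (m.natAbs : ℤ) = -m := by omega
        rw [this, neg_smul, hm', neg_zero]
    rwa [natCast_zsmul] at h2
  have : Module.Flat ℤ ℚ := IsLocalization.flat ℚ (nonZeroDivisors ℤ)
  have hinj := Module.Flat.lTensor_preserves_injective_linearMap (M := ℚ) f hf
  have hne : ((1:ℚ) ⊗ₜ[ℤ] x : ℚ ⊗[ℤ] G) ≠ 0 := by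
    have : ((1:ℚ) ⊗ₜ[ℤ] x : ℚ ⊗[ℤ] G) = f.lTensor ℚ ((1:ℚ) ⊗ₜ[ℤ] (1:ℤ)) := by
      simp [hfdef]
    rw [this]
    intro h0
    have h1 : ((1:ℚ) ⊗ₜ[ℤ] (1:ℤ) : ℚ ⊗[ℤ] ℤ) = 0 := by
      apply hinj; rw [h0, map_zero]
    have := congrArg (TensorProduct.rid ℤ ℚ) h1
    simp at this
  obtain ⟨ψ, hψ⟩ : ∃ ψ : Module.Dual ℚ (ℚ ⊗[ℤ] G), ψ ((1:ℚ) ⊗ₜ[ℤ] x) ≠ 0 := by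
    by_contra h
    push_neg at h
    exact hne ((Module.forall_dual_apply_eq_zero_iff ℚ _).mp h)
  refine ⟨(ψ.restrictScalars ℤ).comp ((TensorProduct.mk ℤ ℚ G) 1), hψ⟩

lemma tensor_torsion_left {A B : Type} [AddCommGroup A] [AddCommGroup B]
    (h : ∀ a : A, ∃ n : ℕ, 0 < n ∧ n • a = 0) (z : A ⊗[ℤ] B) :
    ∃ n : ℕ, 0 < n ∧ n • z = 0 := by
  induction z using TensorProduct.induction_on with
  | zero => exact ⟨1, one_pos, by simp⟩
  | tmul a b =>
    obtain ⟨n, hn, ha⟩ := h a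
    refine ⟨n, hn, ?_⟩
    rw [← natCast_zsmul, TensorProduct.smul_tmul', natCast_zsmul, ha,
      TensorProduct.zero_tmul]
  | add u v hu hv =>
    obtain ⟨n, hn, hnu⟩ := hu
    obtain ⟨m, hm, hmv⟩ := hv
    refine ⟨n * m, Nat.mul_pos hn hm, ?_⟩
    rw [smul_add, mul_comm, mul_smul, hnu, smul_zero, mul_smul, smul_comm, hmv, smul_zero, zero_add]

lemma tensor_torsion_right {A B : Type} [AddCommGroup A] [AddCommGroup B]
    (h : ∀ b : B, ∃ n : ℕ, 0 < n ∧ n • b = 0) (z : A ⊗[ℤ] B) :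
    ∃ n : ℕ, 0 < n ∧ n • z = 0 := by
  induction z using TensorProduct.induction_on with
  | zero => exact ⟨1, one_pos, by simp⟩
  | tmul a b =>
    obtain ⟨n, hn, hb⟩ := h b
    refine ⟨n, hn, ?_⟩
    rw [← natCast_zsmul, ← TensorProduct.tmul_smul, natCast_zsmul, hb,
      TensorProduct.tmul_zero]
  | add u v hu hv =>
    obtain ⟨n, hn, hnu⟩ := hu
    obtain ⟨m, hm, hmv⟩ := hv
    refine ⟨n * m, Nat.mul_pos hn hm, ?_⟩
    rw [smul_add, mul_comm, mul_smul, hnu, smul_zero, mul_smul, smul_comm, hmv, smul_zero, zero_add]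

theorem stmt2 (G₀ G₁ : Type) [AddCommGroup G₀] [AddCommGroup G₁]
    [Nontrivial G₀] [Nontrivial G₁] :
    (∃ x : G₀ ⊗[ℤ] G₁, ∀ n : ℕ, 0 < n → n • x ≠ 0) ↔
      ((∃ x : G₀, ∀ n : ℕ, 0 < n → n • x ≠ 0) ∧
       (∃ y : G₁, ∀ n : ℕ, 0 < n → n • y ≠ 0)) := by
  constructor
  · rintro ⟨z, hz⟩
    constructor
    · by_contra h
      push_neg at h
      have h' : ∀ a : G₀, ∃ n : ℕ, 0 < n ∧ n • a = 0 := by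
        intro a
        obtain ⟨n, hn, ha⟩ := h a
        exact ⟨n, hn, ha⟩
      obtain ⟨n, hn, h0⟩ := tensor_torsion_left h' z
      exact hz n hn h0
    · by_contra h
      push_neg at h
      have h' : ∀ b : G₁, ∃ n : ℕ, 0 < n ∧ n • b = 0 := by
        intro b
        obtain ⟨n, hn, hb⟩ := h b
        exact ⟨n, hn, hb⟩
      obtain ⟨n, hn, h0⟩ := tensor_torsion_right h' z
      exact hz n hn h0
  · rintro ⟨⟨x, hx⟩, ⟨y, hy⟩⟩
    obtain ⟨φ, hφ⟩ := exists_rat_hom x hx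
    obtain ⟨ψ, hψ⟩ := exists_rat_hom y hy
    set m : ℚ ⊗[ℤ] ℚ →ₗ[ℤ] ℚ := TensorProduct.lift (LinearMap.mul ℤ ℚ)
    set F : G₀ ⊗[ℤ] G₁ →ₗ[ℤ] ℚ := m.comp (TensorProduct.map φ ψ)
    refine ⟨x ⊗ₜ y, fun n hn h0 => ?_⟩
    have : F (n • (x ⊗ₜ y)) = 0 := by rw [h0, map_zero]
    rw [map_nsmul] at this
    have hF : F (x ⊗ₜ y) = φ x * ψ y := by
      show m (TensorProduct.map φ ψ (x ⊗ₜ y)) = _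
      simp [m]
      exact TensorProduct.lift.tmul _ _
    rw [hF, smul_eq_zero] at this
    rcases this with h | h
    · omega
    · rcases mul_eq_zero.mp h with h | h
      · exact hφ h
      · exact hψ h
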